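/- Let V be a ℚ-vector space with a symmetric bilinear form ⟨·,·⟩, and let E₁ⁱ, E₂ⁱ (i ∈ Fin 10), C, F, ξ be vectors in V such that the family consisting of all E₁ⁱ, E₂ⁱ together with C and F is a basis of V, and the following hold: ⟨E₁ⁱ,E₁ⁱ⟩ = ⟨E₂ⁱ,E₂ⁱ⟩ = −2 and ⟨E₁ⁱ,E₂ⁱ⟩ = 1 for all i, while E-vectors belonging to distinct indices i are orthogonal; ⟨F,F⟩ = 0; ⟨F,E₁ⁱ⟩ = ⟨F,E₂ⁱ⟩ = 0 for all i; ⟨F,C⟩ = 3; ⟨ξ,F⟩ = 3; ⟨C,C⟩ = −2; ⟨C,E₁ⁱ⟩ = 1 for all i ∈ Fin 10; ⟨C,E₂ⁱ⟩ = 0 for i = 1,…,9 and ⟨C,E₂¹⁰⟩ = 1; ⟨ξ,E₁ⁱ⟩ = ⟨ξ,E₂ⁱ⟩ = 1 for all i; ⟨ξ,ξ⟩ = −2. Then ξ = −(1/3)•Σ_{i=1}^{9}(E₁ⁱ + 2•E₂ⁱ) + C + 2•F; in particular Σ_{i=1}^{9}(E₁ⁱ + 2•E₂ⁱ) = 3•(C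 + 2•F − ξ). -/

import Mathlib

/-- Theorem 9.8 of the paper: expression of the curve of cusps `ξ` of a quasi-elliptic
K3 surface with 10 fibers of type IV in terms of the fibre components, the 3-section `C`
and the fiber class `F`; in particular `∑_{i=1}^{9} (E₁ⁱ + 2E₂ⁱ)` is divisible by 3. -/
theorem stmt2 (V : Type*) [AddCommGroup V] [Module ℚ V]
    (B : V →ₗ[ℚ] V →ₗ[ℚ] ℚ)
    (hsymm : ∀ x y, B x y = B y x)
    (E₁ E₂ : Fin 10 → V) (C F ξ : V)
    (hindep : LinearIndependent ℚ
      (Sum.elim (Sum.elim E₁ E₂)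
        (Sum.elim (fun _ : Unit => C) (fun _ : Unit => F))))
    (hspan : Submodule.span ℚ (Set.range
      (Sum.elim (Sum.elim E₁ E₂)
        (Sum.elim (fun _ : Unit => C) (fun _ : Unit => F)))) = ⊤)
    (hE₁E₁ : ∀ i, B (E₁ i) (E₁ i) = -2)
    (hE₂E₂ : ∀ i, B (E₂ i) (E₂ i) = -2)
    (hE₁E₂ : ∀ i, B (E₁ i) (E₂ i) = 1)
    (hE₁E₁' : ∀ i j, i ≠ j → B (E₁ i) (E₁ j) = 0)
    (hE₂E₂' : ∀ i j, i ≠ j → B (E₂ i) (E₂ j) = 0)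
    (hE₁E₂' : ∀ i j, i ≠ j → B (E₁ i) (E₂ j) = 0)
    (hFF : B F F = 0)
    (hFE₁ : ∀ i, B F (E₁ i) = 0)
    (hFE₂ : ∀ i, B F (E₂ i) = 0)
    (hFC : B F C = 3)
    (hξF : B ξ F = 3)
    (hCC : B C C = -2)
    (hCE₁ : ∀ i, B C (E₁ i) = 1)
    (hCE₂ : ∀ i : Fin 10, (i : ℕ) < 9 → B C (E₂ i) = 0)
    (hCE₂ten : B C (E₂ 9) = 1)
    (hξE₁ : ∀ i, B ξ (E₁ i) = 1)
    (hξE₂ : ∀ i, B ξ (E₂ i) = 1)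
    (hξξ : B ξ ξ = -2) :
    ξ = -((1 : ℚ) / 3) •
        (∑ i ∈ Finset.univ.filter (fun i : Fin 10 => (i : ℕ) < 9), (E₁ i + 2 • E₂ i))
        + C + 2 • F ∧
    (∑ i ∈ Finset.univ.filter (fun i : Fin 10 => (i : ℕ) < 9), (E₁ i + 2 • E₂ i))
      = 3 • (C + 2 • F - ξ) := by
  classical
  set T : Finset (Fin 10) := Finset.univ.filter (fun i : Fin 10 => (i : ℕ) < 9) with hT
  have hTmem : ∀ i : Fin 10, i ∈ T ↔ (i : ℕ) < 9 := by
    intro i; simp [hT]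
  have hTcard : T.card = 9 := by decide
  have h9 : ∀ j : Fin 10, ¬ ((j : ℕ) < 9) → j = 9 := by
    intro j h
    have := j.isLt
    apply Fin.ext
    show (j : ℕ) = 9
    omega
  set S : V := ∑ i ∈ T, (E₁ i + 2 • E₂ i) with hS
  have hexp : ∀ (x : V) (i : Fin 10),
      B x (E₁ i + 2 • E₂ i) = B x (E₁ i) + 2 * B x (E₂ i) := by
    intro x i
    rw [map_add, map_nsmul, nsmul_eq_mul]
    norm_num
  -- sums against S
  have hSE₁ : ∀ j, B (E₁ j) S = 0 := by
    intro j
    rw [hS, map_sum]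
    apply Finset.sum_eq_zero
    intro i hi
    rw [hexp]
    rcases eq_or_ne j i with rfl | h
    · rw [hE₁E₁ j, hE₁E₂ j]; ring
    · rw [hE₁E₁' j i h, hE₁E₂' j i h]; ring
  have hSE₂ : ∀ j : Fin 10, (j : ℕ) < 9 → B (E₂ j) S = -3 := by
    intro j hj
    rw [hS, map_sum]
    rw [Finset.sum_eq_single_of_mem j ((hTmem j).2 hj)]
    · rw [hexp, hsymm (E₂ j) (E₁ j), hE₁E₂ j, hE₂E₂ j]; ring
    · intro i hi hne
      rw [hexp, hsymm (E₂ j) (E₁ i), hE₁E₂' i j hne, hE₂E₂' j i hne.symm]; ring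
  have hSE₂9 : B (E₂ 9) S = 0 := by
    rw [hS, map_sum]
    apply Finset.sum_eq_zero
    intro i hi
    have hi9 : i ≠ 9 := by
      intro h
      have := (hTmem i).1 hi
      rw [h] at this
      exact absurd this (by decide)
    rw [hexp, hsymm (E₂ 9) (E₁ i), hE₁E₂' i 9 hi9, hE₂E₂' 9 i (Ne.symm hi9)]; ring
  have hSF : B F S = 0 := by
    rw [hS, map_sum]
    apply Finset.sum_eq_zero
    intro i hi
    rw [hexp, hFE₁ i, hFE₂ i]; ring
  have hSC : B C S = 9 := by
    rw [hS, map_sum]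
    rw [Finset.sum_congr rfl (fun i hi => by
      rw [hexp, hCE₁ i, hCE₂ i ((hTmem i).1 hi)]; ring : ∀ i ∈ T, B C (E₁ i + 2 • E₂ i) = 1)]
    rw [Finset.sum_const, hTcard]; norm_num
  have hSξ : B ξ S = 27 := by
    rw [hS, map_sum]
    rw [Finset.sum_congr rfl (fun i hi => by
      rw [hexp, hξE₁ i, hξE₂ i]; ring : ∀ i ∈ T, B ξ (E₁ i + 2 • E₂ i) = 3)]
    rw [Finset.sum_const, hTcard]; norm_num
  set R : V := -((1 : ℚ) / 3) • S + C + 2 • F with hR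
  have hBR : ∀ x : V, B x R = -((1 : ℚ)/3) * B x S + B x C + 2 * B x F := by
    intro x
    rw [hR, map_add, map_add, map_smul, map_nsmul, nsmul_eq_mul, smul_eq_mul]
    norm_num
  set δ : V := ξ - R with hδdef
  have hξdec : ξ = δ + R := by rw [hδdef]; abel
  have hδE₁ : ∀ j, B (E₁ j) δ = 0 := by
    intro j
    rw [hδdef, map_sub, hBR, hSE₁ j, hsymm (E₁ j) ξ, hξE₁ j,
      hsymm (E₁ j) C, hCE₁ j, hsymm (E₁ j) F, hFE₁ j]
    ring
  have hδE₂ : ∀ j, B (E₂ j) δ = 0 := by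
    intro j
    by_cases hj : (j : ℕ) < 9
    · rw [hδdef, map_sub, hBR, hSE₂ j hj, hsymm (E₂ j) ξ, hξE₂ j,
        hsymm (E₂ j) C, hCE₂ j hj, hsymm (E₂ j) F, hFE₂ j]
      ring
    · rw [h9 j hj, hδdef, map_sub, hBR, hSE₂9, hsymm (E₂ 9) ξ, hξE₂ 9,
        hsymm (E₂ 9) C, hCE₂ten, hsymm (E₂ 9) F, hFE₂ 9]
      ring
  have hδF : B F δ = 0 := by
    rw [hδdef, map_sub, hBR, hSF, hsymm F ξ, hξF, hFC, hFF]
    ring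
  -- express δ in the basis
  let b : Module.Basis ((Fin 10 ⊕ Fin 10) ⊕ (Unit ⊕ Unit)) ℚ V :=
    Module.Basis.mk hindep (le_of_eq hspan.symm)
  set a : Fin 10 → ℚ := fun i => b.repr δ (Sum.inl (Sum.inl i)) with ha
  set bb : Fin 10 → ℚ := fun i => b.repr δ (Sum.inl (Sum.inr i)) with hbb
  set γ : ℚ := b.repr δ (Sum.inr (Sum.inl ())) with hγ
  set φ : ℚ := b.repr δ (Sum.inr (Sum.inr ())) with hφ
  have hδeq : δ = (∑ i, a i • E₁ i) + (∑ i, bb i • E₂ i) + γ • C + φ • F := by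
    conv_lhs => rw [← b.sum_repr δ]
    simp only [Fintype.sum_sum_type, b, Module.Basis.mk_apply, Sum.elim_inl, Sum.elim_inr,
      Fintype.sum_unique]
    abel
  have hBδ : ∀ x : V, B x δ =
      (∑ i, a i * B x (E₁ i)) + (∑ i, bb i * B x (E₂ i)) + γ * B x C + φ * B x F := by
    intro x
    conv_lhs => rw [hδeq]
    rw [map_add, map_add, map_add, map_sum, map_sum, map_smul, map_smul]
    simp only [map_smul, smul_eq_mul]
  have hγ0 : γ = 0 := by
    have h := hBδ F
    rw [hδF, hFC, hFF] at h
    simp only [hFE₁, hFE₂, mul_zero, Finset.sum_const_zero] at h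
    linarith
  have hab : ∀ j, a j = 2 * bb j := by
    intro j
    have h := hBδ (E₂ j)
    rw [hδE₂ j, hγ0] at h
    rw [Finset.sum_eq_single j (fun i _ hne => by
        rw [hsymm (E₂ j) (E₁ i), hE₁E₂' i j hne]; ring)
      (fun h => absurd (Finset.mem_univ j) h)] at h
    rw [Finset.sum_eq_single j (fun i _ hne => by
        rw [hE₂E₂' j i hne.symm]; ring)
      (fun h => absurd (Finset.mem_univ j) h)] at h
    rw [hsymm (E₂ j) (E₁ j), hE₁E₂ j, hE₂E₂ j, hsymm (E₂ j) F, hFE₂ j] at h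
    linarith
  have hbb0 : ∀ j, bb j = 0 := by
    intro j
    have h := hBδ (E₁ j)
    rw [hδE₁ j, hγ0] at h
    rw [Finset.sum_eq_single j (fun i _ hne => by
        rw [hE₁E₁' j i hne.symm]; ring)
      (fun h => absurd (Finset.mem_univ j) h)] at h
    rw [Finset.sum_eq_single j (fun i _ hne => by
        rw [hE₁E₂' j i hne.symm]; ring)
      (fun h => absurd (Finset.mem_univ j) h)] at h
    rw [hE₁E₁ j, hE₁E₂ j, hsymm (E₁ j) F, hFE₁ j, hab j] at h
    linarith
  have ha0 : ∀ j, a j = 0 := by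
    intro j; rw [hab j, hbb0 j]; ring
  have hδF' : δ = φ • F := by
    rw [hδeq, hγ0]
    simp only [ha0, hbb0, zero_smul, Finset.sum_const_zero]
    abel
  -- pin down φ using ξ
  have hCδ : B C δ = 3 * φ := by
    rw [hδF', map_smul, smul_eq_mul, hsymm C F, hFC]; ring
  have hCR : B C R = 1 := by
    rw [hBR, hSC, hCC, hsymm C F, hFC]; ring
  have hCξ : B C ξ = 3 * φ + 1 := by
    rw [hξdec, map_add, hCδ, hCR]
  have hξδ : B ξ δ = 3 * φ := by
    rw [hδF', map_smul, hξF, smul_eq_mul]; ring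
  have hξδ' : B ξ δ = -(3 * φ) := by
    rw [hδdef, map_sub, hξξ, hBR, hSξ, hsymm ξ C, hCξ, hξF]
    ring
  have hφ0 : φ = 0 := by
    rw [hξδ] at hξδ'
    linarith
  have hδ0 : δ = 0 := by rw [hδF', hφ0, zero_smul]
  have h1 : ξ = R := by
    have := hδdef ▸ hδ0
    rw [sub_eq_zero] at this
    exact this
  refine ⟨h1, ?_⟩
  rw [h1, hR]
  module
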